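/- (Proposition 2, part I.) For every integer j > t̄, the sequence φ satisfies the exponential bound φ(j) ≤ γ^{j−t̄}·φ(0), where γ = (1−λ_e)^{1/(2(t̄+1))}. -/
import Mathlib


open Filter

/-- Proposition 2, part I: exponential bound on `φ`. -/
theorem phi_exponential_bound
    (lam lam_e : ℝ) (hlam0 : 0 < lam) (hlam1 : lam < 1)
    (hle0 : 0 < lam_e) (hle1 : lam_e < 1)
    (tbar : ℕ)
    (φ : ℕ → ℝ)
    (hφ0 : φ 0 = lam * lam_e / (lam * (tbar : ℝ) + 1))
    (hφ1 : ∀ j, j < tbar → φ (j + 1) = (1 - lam) * (1 - lam_e) * φ j)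
    (hφ2 : ∀ j, tbar ≤ j → φ (j + 1) =
      (1 - lam) * (1 - lam_e) * φ j + lam * (1 - lam_e) * φ (j - tbar)) :
    ∀ j : ℕ, tbar < j →
      φ j ≤ ((1 - lam_e) ^ ((1 : ℝ) / (2 * ((tbar : ℝ) + 1)))) ^ (j - tbar) * φ 0 := by
  set γ : ℝ := (1 - lam_e) ^ ((1 : ℝ) / (2 * ((tbar : ℝ) + 1))) with hγdef
  have hle : (0:ℝ) < 1 - lam_e := by linarith
  have hγpos : 0 < γ := Real.rpow_pos_of_pos hle _
  have hγlt1 : γ < 1 := by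
    apply Real.rpow_lt_one hle.le (by linarith)
    positivity
  have hγpow : γ ^ (2 * (tbar + 1)) = 1 - lam_e := by
    rw [hγdef, ← Real.rpow_natCast _ (2 * (tbar + 1)),
      ← Real.rpow_mul hle.le]
    have : (1 : ℝ) / (2 * ((tbar : ℝ) + 1)) * ((2 * (tbar + 1) : ℕ) : ℝ) = 1 := by
      push_cast
      field_simp
    rw [this, Real.rpow_one]
  have hφ0pos : 0 < φ 0 := by
    rw [hφ0]
    apply div_pos (mul_pos hlam0 hle0)
    have := mul_nonneg hlam0.le (Nat.cast_nonneg tbar)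
    linarith
  have hα : (0:ℝ) < (1 - lam) * (1 - lam_e) := by nlinarith
  have hβ : (0:ℝ) < lam * (1 - lam_e) := by nlinarith
  have main : ∀ j, φ j ≤ γ ^ (j - tbar) * φ 0 := by
    intro j
    induction j using Nat.strong_induction_on with
    | _ j ih =>
      match j with
      | 0 => simp
      | (i + 1) =>
        by_cases h : tbar ≤ i
        · rw [hφ2 i h]
          have h1 := ih i (Nat.lt_succ_self i)
          have h2 := ih (i - tbar) (by omega)
          set k := i - tbar with hk
          set m := (i - tbar) - tbar with hm
          have hkm : m ≤ k := by omega
          have hkm' : k ≤ m + tbar := by omega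
          have hsucc : (i + 1) - tbar = k + 1 := by omega
          rw [hsucc]
          have hstep1 : γ ^ k ≤ γ ^ m :=
            pow_le_pow_of_le_one hγpos.le hγlt1.le hkm
          have key : (1 - lam) * (1 - lam_e) * γ ^ k + lam * (1 - lam_e) * γ ^ m
              ≤ γ ^ (k + 1) := by
            have hA : (1 - lam) * (1 - lam_e) * γ ^ k + lam * (1 - lam_e) * γ ^ m
                ≤ (1 - lam_e) * γ ^ m := by nlinarith
            have hB : (1 - lam_e) * γ ^ m = γ ^ (2 * (tbar + 1) + m) := by
              rw [pow_add, hγpow]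
            have hC : γ ^ (2 * (tbar + 1) + m) ≤ γ ^ (k + 1) :=
              pow_le_pow_of_le_one hγpos.le hγlt1.le (by omega)
            linarith
          calc (1 - lam) * (1 - lam_e) * φ i + lam * (1 - lam_e) * φ (i - tbar)
              ≤ (1 - lam) * (1 - lam_e) * (γ ^ k * φ 0)
                + lam * (1 - lam_e) * (γ ^ m * φ 0) := by
                apply add_le_add
                · exact mul_le_mul_of_nonneg_left h1 hα.le
                · exact mul_le_mul_of_nonneg_left h2 hβ.le
            _ = ((1 - lam) * (1 - lam_e) * γ ^ k + lam * (1 - lam_e) * γ ^ m) * φ 0 := by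
                ring
            _ ≤ γ ^ (k + 1) * φ 0 := by
                exact mul_le_mul_of_nonneg_right key hφ0pos.le
        · push_neg at h
          rw [hφ1 i h]
          have h1 := ih i (Nat.lt_succ_self i)
          have hi0 : i - tbar = 0 := by omega
          have hi1 : (i + 1) - tbar = 0 := by omega
          rw [hi0] at h1
          rw [hi1]
          simp only [pow_zero, one_mul] at h1 ⊢
          nlinarith
  intro j _
  exact main j
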